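/- Let θ≥1, let λ_0,λ_j,λ_k>0, and let K:[0,∞)→[0,∞) be a continuous strictly increasing bijection. Set α_j = λ_0/(λ_0+λ_j), α_k = λ_0/(λ_0+λ_k), F̄(s,t) = exp( −( λ_0K(max(s,t)) + λ_jK(s) + λ_kK(t) )^{1/θ} ), G_j(s) = exp( −((λ_0+λ_j)K(s))^{1/θ} ), G_k(t) = exp( −((λ_0+λ_k)K(t))^{1/θ} ). Define Ĉ_{j,k}:(0,1]²→(0,1] by Ĉ_{j,k}(u,v) = exp( −[ (−ln u)^θ + (1−α_k)(−ln v)^θ ]^{1/θ} ) if α_j(−ln u)^θ ≥ α_k(−ln v)^θ, and Ĉ_{j,k}(u,v) = exp( −[ (1−α_j)(−ln u)^θ + (−ln v)^θ ]^{1/θ} ) otherwise. Then F̄(s,t) = Ĉ_{j,k}( G_j(s), G_k(t) ) for all s,t∈[0,∞). -/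

import Mathlib

open Set

/-- in the Gumbel contagion model, the bivariate joint survival function
of a pair of default times factors through the Archimedean-based Marshall-Olkin
(Archimax) survival copula `Ĉ_{j,k}`. -/
theorem gumbel_bivariate_survival_copula
    (θ lam0 lamj lamk : ℝ) (hθ : 1 ≤ θ)
    (h0 : 0 < lam0) (hj : 0 < lamj) (hk : 0 < lamk)
    (K : ℝ → ℝ) (hKc : ContinuousOn K (Ici 0)) (hKm : StrictMonoOn K (Ici 0))
    (hKb : BijOn K (Ici 0) (Ici 0)) :
    let αj : ℝ := lam0 / (lam0 + lamj)
    let αk : ℝ := lam0 / (lam0 + lamk)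
    let Fbar : ℝ → ℝ → ℝ := fun s t =>
      Real.exp (-(lam0 * K (max s t) + lamj * K s + lamk * K t) ^ (1 / θ))
    let Gj : ℝ → ℝ := fun s => Real.exp (-((lam0 + lamj) * K s) ^ (1 / θ))
    let Gk : ℝ → ℝ := fun t => Real.exp (-((lam0 + lamk) * K t) ^ (1 / θ))
    let Chat : ℝ → ℝ → ℝ := fun u v =>
      if αk * (-Real.log v) ^ θ ≤ αj * (-Real.log u) ^ θ then
        Real.exp (-((-Real.log u) ^ θ + (1 - αk) * (-Real.log v) ^ θ) ^ (1 / θ))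
      else
        Real.exp (-((1 - αj) * (-Real.log u) ^ θ + (-Real.log v) ^ θ) ^ (1 / θ))
    ∀ s t : ℝ, 0 ≤ s → 0 ≤ t → Fbar s t = Chat (Gj s) (Gk t) := by

  intro αj αk Fbar Gj Gk Chat s t hs ht
  have hθ0 : θ ≠ 0 := by linarith
  have hKs : 0 ≤ K s := hKb.mapsTo hs
  have hKt : 0 ≤ K t := hKb.mapsTo ht
  have hj0 : (0:ℝ) < lam0 + lamj := by linarith
  have hk0 : (0:ℝ) < lam0 + lamk := by linarith
  have pc : ∀ x : ℝ, 0 ≤ x → (x ^ (1/θ)) ^ θ = x := fun x hx => by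
    rw [← Real.rpow_mul hx, one_div_mul_cancel hθ0, Real.rpow_one]
  have hGj : (-Real.log (Gj s)) ^ θ = (lam0 + lamj) * K s := by
    simp only [Gj, Real.log_exp, neg_neg]
    exact pc _ (by positivity)
  have hGk : (-Real.log (Gk t)) ^ θ = (lam0 + lamk) * K t := by
    simp only [Gk, Real.log_exp, neg_neg]
    exact pc _ (by positivity)
  have haj : αj * ((lam0 + lamj) * K s) = lam0 * K s := by
    simp only [αj]; field_simp
  have hak : αk * ((lam0 + lamk) * K t) = lam0 * K t := by
    simp only [αk]; field_simp
  have haj' : (1 - αj) * ((lam0 + lamj) * K s) = lamj * K s := by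
    simp only [αj]; field_simp; ring
  have hak' : (1 - αk) * ((lam0 + lamk) * K t) = lamk * K t := by
    simp only [αk]; field_simp; ring
  simp only [Chat, hGj, hGk, haj, hak, haj', hak']
  by_cases h : t ≤ s
  · rw [if_pos (by
      have := (hKm.le_iff_le ht hs).mpr h
      nlinarith)]
    simp only [Fbar, max_eq_left h]
    have hA : lam0 * K s + lamj * K s + lamk * K t
        = (lam0 + lamj) * K s + lamk * K t := by ring
    rw [hA]
  · rw [if_neg (by
      push_neg at h ⊢
      have := hKm hs ht h
      nlinarith)]
    have h' : s ≤ t := le_of_lt (not_le.mp h)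
    simp only [Fbar, max_eq_right h']
    have hA : lam0 * K t + lamj * K s + lamk * K t
        = lamj * K s + (lam0 + lamk) * K t := by ring
    rw [hA]
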